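/- arXiv:2401.04856 — 2 statements merged into one kernel-verified Lean document; each statement's English description precedes it below -/
import Mathlib

section
/- Let $\{y_i\}_{i=1}^N$ be vectors in $\mathbb{R}^d$ and let $w_i = \exp(-\|y_i\|^2)/\sum_{j=1}^N \exp(-\|y_j\|^2)$. Then $\left\|\sum_{i=1}^N w_i y_i\right\|^2 \leq \frac{1}{N}\sum_{i=1}^N \|y_i\|^2$. -/
open Real Finset

theorem softmax_weighted_avg_sq_norm_le
    (N d : ℕ) (y : Fin N → EuclideanSpace ℝ (Fin d))
    (w : Fin N → ℝ)
    (hw : ∀ i, w i = Real.exp (-‖y i‖ ^ 2) / ∑ j, Real.exp (-‖y j‖ ^ 2)) :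
    ‖∑ i, w i • y i‖ ^ 2 ≤ (1 / (N : ℝ)) * ∑ i, ‖y i‖ ^ 2 := by
  rcases Nat.eq_zero_or_pos N with hN | hN
  · subst hN; simp
  have hNe : (Finset.univ : Finset (Fin N)).Nonempty := Finset.univ_nonempty_iff.2 ⟨⟨0, hN⟩⟩
  set a : Fin N → ℝ := fun i => ‖y i‖ ^ 2 with ha
  have hZpos : 0 < ∑ j, Real.exp (-a j) :=
    Finset.sum_pos (fun j _ => Real.exp_pos _) hNe
  set Z : ℝ := ∑ j, Real.exp (-a j) with hZ
  have hwnn : ∀ i, 0 ≤ w i := fun i => by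
    rw [hw]; positivity
  have hwsum : ∑ i, w i = 1 := by
    simp only [hw]
    rw [← Finset.sum_div, div_self (ne_of_gt hZpos)]
  -- Step 1: Jensen / Cauchy-Schwarz
  have h1 : ‖∑ i, w i • y i‖ ≤ ∑ i, w i * ‖y i‖ := by
    calc ‖∑ i, w i • y i‖ ≤ ∑ i, ‖w i • y i‖ := norm_sum_le _ _
      _ = ∑ i, w i * ‖y i‖ := by
          refine Finset.sum_congr rfl fun i _ => ?_
          rw [norm_smul, Real.norm_eq_abs, abs_of_nonneg (hwnn i)]
  have h2 : (∑ i, w i * ‖y i‖) ^ 2 ≤ ∑ i, w i * a i := by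
    have hcs := Finset.sum_mul_sq_le_sq_mul_sq Finset.univ
      (fun i => Real.sqrt (w i)) (fun i => Real.sqrt (w i) * ‖y i‖)
    have e1 : ∀ i : Fin N, Real.sqrt (w i) * (Real.sqrt (w i) * ‖y i‖) = w i * ‖y i‖ := by
      intro i
      rw [← mul_assoc, Real.mul_self_sqrt (hwnn i)]
    have e2 : ∀ i : Fin N, Real.sqrt (w i) ^ 2 = w i := fun i => Real.sq_sqrt (hwnn i)
    have e3 : ∀ i : Fin N, (Real.sqrt (w i) * ‖y i‖) ^ 2 = w i * a i := by
      intro i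
      rw [mul_pow, e2]
    simp only [e1, e2, e3] at hcs
    rwa [hwsum, one_mul] at hcs
  have step1 : ‖∑ i, w i • y i‖ ^ 2 ≤ ∑ i, w i * a i :=
    le_trans (pow_le_pow_left₀ (norm_nonneg _) h1 2) h2
  -- Step 2: Chebyshev
  have hanti : Antivary (fun i => Real.exp (-a i)) a := by
    intro i j hij
    exact Real.exp_le_exp.2 (neg_le_neg hij.le)
  have hcheb := hanti.card_mul_sum_le_sum_mul_sum
  simp only [Fintype.card_fin] at hcheb
  have step2 : ∑ i, w i * a i ≤ (1 / (N : ℝ)) * ∑ i, a i := by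
    have hNpos : (0 : ℝ) < N := by exact_mod_cast hN
    have hsum : ∑ i, w i * a i = (∑ i, Real.exp (-a i) * a i) / Z := by
      rw [Finset.sum_div]
      refine Finset.sum_congr rfl fun i _ => ?_
      rw [hw i]
      ring
    rw [hsum, one_div, inv_mul_eq_div, div_le_div_iff₀ hZpos hNpos]
    calc (∑ i, Real.exp (-a i) * a i) * (N : ℝ)
        = (N : ℝ) * ∑ i, Real.exp (-a i) * a i := by ring
      _ ≤ (∑ i, Real.exp (-a i)) * ∑ i, a i := hcheb
      _ = (∑ i, a i) * Z := by rw [hZ]; ring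
  exact le_trans step1 step2
end

section
/- Let $\{y_i\}_{i=1}^N \subset \mathbb{R}^d$ satisfy $\|y_i\| \leq d$ for all $i$. Let ${\mathsf{q}}_{T-\delta}(x) = \frac{1}{N}\sum_{i=1}^N \mathcal{N}(x; \mu(\delta)y_i, \sigma(\delta)^2 I)$ and $\mathsf{p}_*^\gamma(x) = \frac{1}{N}\sum_{i=1}^N \mathcal{N}(x; y_i, \sigma(\delta)^2 I)$, where $\mu(\delta) = e^{-\delta}$ and $\sigma(\delta)^2 = 1 - e^{-2\delta}$. Then $\mathrm{TV}({\mathsf{q}}_{T-\delta}, \mathsf{p}_*^\gamma) \leq \frac{d\sqrt{\delta}}{2}$ for any $\delta > 0$. -/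
set_option maxHeartbeats 1000000

open Real MeasureTheory Finset ProbabilityTheory Set

/-- Density of the isotropic Gaussian `N(m, s2 I)` on `ℝ^d`. -/
noncomputable def gaussDensity (d : ℕ) (m : EuclideanSpace ℝ (Fin d)) (s2 : ℝ)
    (x : EuclideanSpace ℝ (Fin d)) : ℝ :=
  (2 * Real.pi * s2) ^ (-(d : ℝ) / 2) * Real.exp (-‖x - m‖ ^ 2 / (2 * s2))



noncomputable def g1 (s2 t : ℝ) : ℝ :=
  (2 * Real.pi * s2) ^ (-(1:ℝ)/2) * Real.exp (-t^2 / (2*s2))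

lemma g1_eq_pdf {s2 : ℝ} (hs2 : 0 < s2) (c t : ℝ) :
    g1 s2 (t - c) = gaussianPDFReal c s2.toNNReal t := by
  rw [g1, gaussianPDFReal]
  have h1 : (0:ℝ) ≤ 2 * Real.pi * s2 := by positivity
  have h2 : ((s2.toNNReal : ℝ)) = s2 := Real.coe_toNNReal _ hs2.le
  rw [h2]
  congr 1
  rw [show -(1:ℝ)/2 = -(1/2) by ring, Real.rpow_neg h1, Real.sqrt_eq_rpow]

lemma g1_nonneg {s2 : ℝ} (hs2 : 0 < s2) (t : ℝ) : 0 ≤ g1 s2 t := by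
  unfold g1; positivity

lemma g1_integrable {s2 : ℝ} (hs2 : 0 < s2) : Integrable (g1 s2) := by
  have : g1 s2 = fun t => gaussianPDFReal 0 s2.toNNReal t := by
    funext t; rw [← g1_eq_pdf hs2 0 t, sub_zero]
  rw [this]
  exact integrable_gaussianPDFReal 0 _

lemma g1_integral {s2 : ℝ} (hs2 : 0 < s2) : ∫ t, g1 s2 t = 1 := by
  have : (fun t => g1 s2 t) = fun t => gaussianPDFReal 0 s2.toNNReal t := by
    funext t; rw [← g1_eq_pdf hs2 0 t, sub_zero]
  rw [this]
  exact integral_gaussianPDFReal_eq_one 0 (by simp [hs2, hs2.le, hs2.ne'])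

lemma g1_le {s2 : ℝ} (hs2 : 0 < s2) (t : ℝ) : g1 s2 t ≤ (2 * Real.pi * s2) ^ (-(1:ℝ)/2) := by
  unfold g1
  apply mul_le_of_le_one_right (by positivity)
  rw [Real.exp_le_one_iff, neg_div]
  have : (0:ℝ) ≤ t^2 / (2*s2) := by positivity
  linarith


lemma g1_anti {s2 : ℝ} (hs2 : 0 < s2) {a b : ℝ} (h : b^2 ≤ a^2) : g1 s2 a ≤ g1 s2 b := by
  unfold g1
  apply mul_le_mul_of_nonneg_left _ (by positivity)
  apply Real.exp_le_exp.2
  apply div_le_div_of_nonneg_right (by linarith) (by positivity) |>.trans_eq rfl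

lemma oneD_tv {s2 : ℝ} (hs2 : 0 < s2) {c : ℝ} (hc : 0 ≤ c) :
    ∫ t, |g1 s2 t - g1 s2 (t - c)| ≤ c / Real.sqrt s2 := by
  set M : ℝ := (2 * Real.pi * s2) ^ (-(1:ℝ)/2) with hM
  have hint1 : Integrable (g1 s2) := g1_integrable hs2
  have hint2 : Integrable (fun t => g1 s2 (t - c)) := hint1.comp_sub_right c
  set f : ℝ → ℝ := fun t => g1 s2 t - g1 s2 (t - c) with hf
  have hfi : Integrable f := hint1.sub hint2
  -- total integral of f is 0
  have hshift : ∫ t, g1 s2 (t - c) = 1 := by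
    rw [integral_sub_right_eq_self (g1 s2) c]; exact g1_integral hs2
  have htot : ∫ t, f t = 0 := by
    rw [hf]; rw [integral_sub hint1 hint2, g1_integral hs2, hshift]; ring
  -- sign of f
  have hpos : ∀ t ∈ Iic (c/2), 0 ≤ f t := by
    intro t ht
    have ht' : t ≤ c/2 := ht
    have : (t - c)^2 ≥ t^2 := by nlinarith
    simpa [hf, sub_nonneg] using g1_anti hs2 this
  have hneg : ∀ t ∈ (Iic (c/2))ᶜ, f t ≤ 0 := by
    intro t ht
    have ht' : c/2 < t := lt_of_not_ge fun h => ht h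
    have : t^2 ≥ (t - c)^2 := by nlinarith
    simpa [hf, sub_nonpos] using g1_anti hs2 this
  -- decompose the integral of |f|
  have e1 : ∫ t in Iic (c/2), |f t| = ∫ t in Iic (c/2), f t :=
    setIntegral_congr_fun measurableSet_Iic fun t ht => abs_of_nonneg (hpos t ht)
  have e2 : ∫ t in (Iic (c/2))ᶜ, |f t| = ∫ t in (Iic (c/2))ᶜ, (-f t) :=
    setIntegral_congr_fun measurableSet_Iic.compl fun t ht => abs_of_nonpos (hneg t ht)
  have hsplit := (integral_add_compl (measurableSet_Iic (a := c/2)) hfi.abs).symm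
  rw [e1, e2] at hsplit
  have hcompl : ∫ t in (Iic (c/2))ᶜ, f t = - ∫ t in Iic (c/2), f t := by
    have := integral_add_compl (measurableSet_Iic (a := c/2)) hfi
    rw [htot] at this; linarith
  have h3 : ∫ t in (Iic (c/2))ᶜ, (-f t) = - ∫ t in (Iic (c/2))ᶜ, f t := integral_neg f
  have habs : ∫ t, |f t| = 2 * ∫ t in Iic (c/2), f t := by
    rw [hsplit, h3, hcompl, neg_neg, two_mul]
  -- compute the set integral as an interval integral
  have hshiftset : ∫ t in Iic (c/2), g1 s2 (t - c) = ∫ t in Iic (c/2 - c), g1 s2 t := by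
    rw [← integral_indicator (measurableSet_Iic (a := c/2)),
        ← integral_indicator (measurableSet_Iic (a := c/2 - c)),
        ← integral_sub_right_eq_self ((Iic (c/2 - c)).indicator (g1 s2)) c]
    congr 1; funext x
    by_cases hx : x ≤ c/2
    · rw [indicator_of_mem (show x ∈ Iic (c/2) from hx),
          indicator_of_mem (show x - c ∈ Iic (c/2 - c) from sub_le_sub_right hx c)]
    · rw [indicator_of_notMem (show x ∉ Iic (c/2) from hx),
          indicator_of_notMem (show x - c ∉ Iic (c/2 - c) from
            fun h => hx (by linarith [show x - c ≤ c/2 - c from h]))]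
  have hIic : ∫ t in Iic (c/2), f t = ∫ t in (c/2 - c)..(c/2), g1 s2 t := by
    rw [hf]
    rw [integral_sub hint1.integrableOn hint2.integrableOn, hshiftset]
    exact intervalIntegral.integral_Iic_sub_Iic hint1.integrableOn hint1.integrableOn
  -- bound the interval integral
  have hbound : ∫ t in (c/2 - c)..(c/2), g1 s2 t ≤ M * c := by
    have h1 := intervalIntegral.norm_integral_le_of_norm_le_const
      (C := M) (f := g1 s2) (a := c/2 - c) (b := c/2)
      (fun x _ => by rw [Real.norm_eq_abs, abs_of_nonneg (g1_nonneg hs2 x)]; exact g1_le hs2 x)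
    have h2 : |c/2 - (c/2 - c)| = c := by rw [abs_of_nonneg (by linarith)]; ring
    calc ∫ t in (c/2 - c)..(c/2), g1 s2 t ≤ ‖∫ t in (c/2 - c)..(c/2), g1 s2 t‖ := le_abs_self _
    _ ≤ M * c := by rw [h2] at h1; exact h1
  -- final arithmetic
  have hMle : 2 * M ≤ 1 / Real.sqrt s2 := by
    have hs : 0 < Real.sqrt s2 := Real.sqrt_pos.2 hs2
    have hA : 0 < Real.sqrt (2*Real.pi) := Real.sqrt_pos.2 (by positivity)
    have hM' : M = (Real.sqrt (2 * Real.pi) * Real.sqrt s2)⁻¹ := by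
      rw [hM, show -(1:ℝ)/2 = -(1/2) by ring, Real.rpow_neg (by positivity),
        ← Real.sqrt_eq_rpow, ← Real.sqrt_mul (by positivity)]
    have h2pi : (2:ℝ) ≤ Real.sqrt (2 * Real.pi) :=
      (Real.le_sqrt (by norm_num) (by positivity)).2 (by nlinarith [Real.pi_gt_three])
    rw [hM', show (2:ℝ) * (Real.sqrt (2*Real.pi) * Real.sqrt s2)⁻¹
        = 2 / (Real.sqrt (2*Real.pi) * Real.sqrt s2) by ring,
      div_le_div_iff₀ (by positivity) hs]
    nlinarith
  calc ∫ t, |f t| = 2 * ∫ t in Iic (c/2), f t := habs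
    _ ≤ 2 * (M * c) := by rw [hIic]; linarith [hbound]
    _ = (2 * M) * c := by ring
    _ ≤ (1 / Real.sqrt s2) * c := mul_le_mul_of_nonneg_right hMle hc
    _ = c / Real.sqrt s2 := by ring

lemma gaussDensity_eq_prod {d : ℕ} {s2 : ℝ} (hs2 : 0 < s2) (m x : EuclideanSpace ℝ (Fin d)) :
    gaussDensity d m s2 x = ∏ j, g1 s2 (x j - m j) := by
  unfold gaussDensity g1
  rw [Finset.prod_mul_distrib, Finset.prod_const, ← Real.exp_sum]
  congr 1
  · rw [← Real.rpow_natCast ((2*Real.pi*s2) ^ (-(1:ℝ)/2)) (Finset.univ.card),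
      ← Real.rpow_mul (by positivity)]
    congr 1
    simp [Finset.card_univ]
    ring
  · congr 1
    have hn : ‖x - m‖^2 = ∑ j, (x j - m j)^2 := by
      rw [EuclideanSpace.norm_eq, Real.sq_sqrt (by positivity)]
      congr 1; funext j
      simp [Real.norm_eq_abs, sq_abs]
    rw [hn, ← Finset.sum_neg_distrib, Finset.sum_div]

lemma euclid_integral_eq {d : ℕ} (h : EuclideanSpace ℝ (Fin d) → ℝ) :
    ∫ x, h x = ∫ x : Fin d → ℝ, h (((MeasurableEquiv.toLp 2 (Fin d → ℝ)).symm).symm x) :=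
  ((MeasurePreserving.symm _ (EuclideanSpace.volume_preserving_symm_measurableEquiv_toLp (Fin d))).integral_comp' h).symm

lemma gaussDensity_integrable {d : ℕ} {s2 : ℝ} (hs2 : 0 < s2) (m : EuclideanSpace ℝ (Fin d)) :
    Integrable (gaussDensity d m s2) := by
  rw [← (MeasurePreserving.symm _ (EuclideanSpace.volume_preserving_symm_measurableEquiv_toLp (Fin d))).integrable_comp_emb
    (MeasurableEquiv.measurableEmbedding _)]
  have : (gaussDensity d m s2) ∘ (((MeasurableEquiv.toLp 2 (Fin d → ℝ)).symm).symm) =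
      fun x : Fin d → ℝ => ∏ j, g1 s2 (x j - m j) := by
    funext x; exact gaussDensity_eq_prod hs2 m _
  rw [this]
  exact Integrable.fintype_prod_dep fun j => (g1_integrable hs2).comp_sub_right (m j)

lemma gaussDensity_apply_pi' {d : ℕ} {s2 : ℝ} (hs2 : 0 < s2) (m : EuclideanSpace ℝ (Fin d))
    (x : Fin d → ℝ) :
    gaussDensity d m s2 (((MeasurableEquiv.toLp 2 (Fin d → ℝ)).symm).symm x) =
      ∏ j, g1 s2 (x j - m j) := by
  rw [gaussDensity_eq_prod hs2]
  rfl

lemma gaussDensity_sub {d : ℕ} (m : EuclideanSpace ℝ (Fin d)) (s2 : ℝ)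
    (x : EuclideanSpace ℝ (Fin d)) :
    gaussDensity d m s2 x = gaussDensity d 0 s2 (x - m) := by
  unfold gaussDensity; rw [sub_zero]

lemma gaussDensity_norm {d : ℕ} (s2 : ℝ) (x z : EuclideanSpace ℝ (Fin d)) (h : ‖x‖ = ‖z‖) :
    gaussDensity d 0 s2 x = gaussDensity d 0 s2 z := by
  unfold gaussDensity; rw [sub_zero, sub_zero, h]

lemma integral_comp_isometry {d : ℕ} (f : EuclideanSpace ℝ (Fin d) → ℝ)
    (e : EuclideanSpace ℝ (Fin d) ≃ₗᵢ[ℝ] EuclideanSpace ℝ (Fin d)) :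
    ∫ z, f (e z) = ∫ z, f z := by
  have hmp : MeasurePreserving (e.toHomeomorph.toMeasurableEquiv) volume volume := by
    simpa only [Homeomorph.toMeasurableEquiv_coe, LinearIsometryEquiv.coe_toHomeomorph]
      using e.measurePreserving
  have h := hmp.integral_comp' f
  simpa only [Homeomorph.toMeasurableEquiv_coe, LinearIsometryEquiv.coe_toHomeomorph] using h

lemma tv_gauss {d : ℕ} {s2 : ℝ} (hs2 : 0 < s2) (a b : EuclideanSpace ℝ (Fin d)) :
    ∫ x, |gaussDensity d a s2 x - gaussDensity d b s2 x| ≤ ‖a - b‖ / Real.sqrt s2 := by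
  rcases eq_or_ne a b with rfl | hab
  · simp only [sub_self, abs_zero, integral_zero, norm_zero, zero_div]; exact le_refl 0
  have hd : 0 < d := by
    by_contra h
    push_neg at h
    interval_cases d
    · exact hab (Subsingleton.elim a b)
  set v := a - b with hv
  have hvne : v ≠ 0 := sub_ne_zero.2 hab
  set c := ‖v‖ with hc
  have hcpos : 0 < c := norm_pos_iff.2 hvne
  set i0 : Fin d := ⟨0, hd⟩
  set u : EuclideanSpace ℝ (Fin d) := EuclideanSpace.single i0 c with hu
  have hun : ‖u‖ = c := by
    rw [hu, EuclideanSpace.norm_single, Real.norm_eq_abs, abs_of_pos hcpos]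
  -- rotation taking u to v
  set e := Submodule.reflection (ℝ ∙ (u - v))ᗮ with he
  have heu : e u = v := Submodule.reflection_sub (by rw [hun])
  -- Step 1: translate
  have step1 : ∫ x, |gaussDensity d a s2 x - gaussDensity d b s2 x| =
      ∫ z, |gaussDensity d 0 s2 (z - v) - gaussDensity d 0 s2 z| := by
    have : ∀ x : EuclideanSpace ℝ (Fin d),
        |gaussDensity d a s2 x - gaussDensity d b s2 x| =
        (fun z => |gaussDensity d 0 s2 (z - v) - gaussDensity d 0 s2 z|) (x - b) := by
      intro x
      rw [gaussDensity_sub a, gaussDensity_sub b]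
      congr 2
      simp only [hv]
      abel
    simp_rw [this]
    exact integral_sub_right_eq_self
      (fun z => |gaussDensity d 0 s2 (z - v) - gaussDensity d 0 s2 z|) b
  -- Step 2: rotate
  have step2 : ∫ z, |gaussDensity d 0 s2 (z - v) - gaussDensity d 0 s2 z| =
      ∫ z, |gaussDensity d 0 s2 (z - u) - gaussDensity d 0 s2 z| := by
    rw [← integral_comp_isometry (fun z => |gaussDensity d 0 s2 (z - v) - gaussDensity d 0 s2 z|) e]
    congr 1
    funext z
    have h1 : gaussDensity d 0 s2 ((e z) - v) = gaussDensity d 0 s2 (z - u) := by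
      apply gaussDensity_norm
      rw [← heu, ← map_sub]
      exact e.norm_map _
    have h2 : gaussDensity d 0 s2 (e z) = gaussDensity d 0 s2 z :=
      gaussDensity_norm _ _ _ (e.norm_map z)
    rw [h1, h2]
  -- Step 3: product structure
  have step3 : ∫ z, |gaussDensity d 0 s2 (z - u) - gaussDensity d 0 s2 z| =
      ∫ t, |g1 s2 (t - c) - g1 s2 t| := by
    rw [euclid_integral_eq]
    set F0 : Fin d → ℝ → ℝ := fun j t => if j = i0 then |g1 s2 (t - c) - g1 s2 t| else g1 s2 t
      with hF0
    have huj : ∀ j, u j = if j = i0 then c else 0 := fun j => by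
      rw [hu]; exact EuclideanSpace.single_apply i0 c j
    have key : ∀ x : Fin d → ℝ,
        |gaussDensity d 0 s2 ((((MeasurableEquiv.toLp 2 (Fin d → ℝ)).symm).symm x) - u) -
          gaussDensity d 0 s2 (((MeasurableEquiv.toLp 2 (Fin d → ℝ)).symm).symm x)| =
        ∏ j, F0 j (x j) := by
      intro x
      rw [← gaussDensity_sub u s2 (((MeasurableEquiv.toLp 2 (Fin d → ℝ)).symm).symm x),
        gaussDensity_apply_pi' hs2 u x, gaussDensity_apply_pi' hs2 0 x]
      have hz : ∀ j ∈ Finset.univ, g1 s2 (x j - (0 : EuclideanSpace ℝ (Fin d)) j) = g1 s2 (x j) :=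
        fun j _ => by rw [show (0 : EuclideanSpace ℝ (Fin d)) j = (0:ℝ) from rfl, sub_zero]
      rw [Finset.prod_congr rfl hz]
      rw [← Finset.mul_prod_erase Finset.univ _ (Finset.mem_univ i0),
          ← Finset.mul_prod_erase Finset.univ (fun j => g1 s2 (x j)) (Finset.mem_univ i0),
          ← Finset.mul_prod_erase Finset.univ (fun j => F0 j (x j)) (Finset.mem_univ i0)]
      have hrest : ∀ j ∈ Finset.univ.erase i0, g1 s2 (x j - u j) = g1 s2 (x j) := by
        intro j hj
        rw [huj j, if_neg (Finset.mem_erase.1 hj).1, sub_zero]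
      rw [Finset.prod_congr rfl hrest]
      have hrest2 : ∀ j ∈ Finset.univ.erase i0, F0 j (x j) = g1 s2 (x j) := by
        intro j hj
        rw [hF0]; exact if_neg (Finset.mem_erase.1 hj).1
      rw [Finset.prod_congr rfl hrest2]
      rw [huj i0, if_pos rfl, ← sub_mul, abs_mul,
        abs_of_nonneg (Finset.prod_nonneg fun j _ => g1_nonneg hs2 _)]
      simp [hF0]
    simp_rw [key]
    rw [MeasureTheory.integral_fintype_prod_volume_eq_prod (ι := Fin d) F0]
    rw [← Finset.mul_prod_erase Finset.univ _ (Finset.mem_univ i0)]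
    have hone : ∀ j ∈ Finset.univ.erase i0, ∫ t, F0 j t = 1 := by
      intro j hj
      have he1 : F0 j = g1 s2 := by funext t; rw [hF0]; exact if_neg (Finset.mem_erase.1 hj).1
      rw [he1]; exact g1_integral hs2
    rw [Finset.prod_congr rfl hone, Finset.prod_const_one, mul_one]
    have : F0 i0 = fun t => |g1 s2 (t - c) - g1 s2 t| := by
      funext t; rw [hF0]; simp
    rw [this]
  rw [step1, step2, step3]
  calc ∫ t, |g1 s2 (t - c) - g1 s2 t| = ∫ t, |g1 s2 t - g1 s2 (t - c)| := by
        congr 1; funext t; exact abs_sub_comm _ _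
    _ ≤ c / Real.sqrt s2 := oneD_tv hs2 hcpos.le


theorem tv_backward_vs_kde
    (d N : ℕ) (y : Fin N → EuclideanSpace ℝ (Fin d))
    (hy : ∀ i, ‖y i‖ ≤ (d : ℝ))
    (δ : ℝ) (hδ : 0 < δ)
    (μδ σδ2 : ℝ) (hμδ : μδ = Real.exp (-δ)) (hσδ2 : σδ2 = 1 - Real.exp (-2 * δ)) :
    (1 / 2) * ∫ x, |(1 / (N : ℝ)) * (∑ i, gaussDensity d (μδ • y i) σδ2 x) -
        (1 / (N : ℝ)) * (∑ i, gaussDensity d (y i) σδ2 x)| ≤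
      (d : ℝ) * Real.sqrt δ / 2 := by
  have hμpos : 0 < μδ := hμδ ▸ Real.exp_pos _
  have hμlt : μδ < 1 := by
    rw [hμδ, Real.exp_lt_one_iff]; linarith
  have hs2 : 0 < σδ2 := by
    rw [hσδ2, sub_pos, Real.exp_lt_one_iff]; linarith
  have hsq : Real.sqrt σδ2 > 0 := Real.sqrt_pos.2 hs2
  -- the key fraction bound
  have hfrac : (1 - μδ) / Real.sqrt σδ2 ≤ Real.sqrt δ := by
    have hμsq : μδ ^ 2 = Real.exp (-2 * δ) := by
      rw [hμδ, ← Real.exp_nat_mul]; norm_num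
    have h1 : 1 - μδ ≤ δ := by
      have := Real.add_one_le_exp (-δ)
      rw [← hμδ] at this; linarith
    have hkey : (1 - μδ) ^ 2 ≤ δ * σδ2 := by
      rw [hσδ2, ← hμsq]
      nlinarith [hμpos.le, hμlt.le]
    have h2 : 1 - μδ ≤ Real.sqrt (δ * σδ2) :=
      (Real.le_sqrt (by linarith) (by positivity)).2 hkey
    rw [div_le_iff₀ hsq]
    rw [Real.sqrt_mul hδ.le] at h2
    exact h2
  rcases Nat.eq_zero_or_pos N with hN | hN
  · subst hN
    simp only [Nat.cast_zero, div_zero, zero_mul, univ_eq_empty, Finset.sum_empty, mul_zero,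
      sub_zero, abs_zero, integral_zero]
    positivity
  -- per-component bound
  have hcomp : ∀ i, ∫ x, |gaussDensity d (μδ • y i) σδ2 x - gaussDensity d (y i) σδ2 x| ≤
      (1 - μδ) * d / Real.sqrt σδ2 := by
    intro i
    refine (tv_gauss hs2 _ _).trans ?_
    apply div_le_div_of_nonneg_right ?_ hsq.le |>.trans_eq rfl
    have : μδ • y i - y i = (μδ - 1) • y i := by rw [sub_smul, one_smul]
    rw [this, norm_smul, Real.norm_eq_abs, abs_of_neg (by linarith), neg_sub]
    have h1 : (0:ℝ) ≤ 1 - μδ := by linarith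
    calc (1 - μδ) * ‖y i‖ ≤ (1 - μδ) * d := mul_le_mul_of_nonneg_left (hy i) h1
      _ = (1 - μδ) * d := rfl
  -- integrability of the dominating function
  set g : EuclideanSpace ℝ (Fin d) → ℝ := fun x =>
    (1 / (N : ℝ)) * ∑ i, |gaussDensity d (μδ • y i) σδ2 x - gaussDensity d (y i) σδ2 x| with hg
  have hgint : Integrable g := by
    apply Integrable.const_mul
    exact integrable_finset_sum _ fun i _ =>
      ((gaussDensity_integrable hs2 _).sub (gaussDensity_integrable hs2 _)).abs
  have hmono : ∀ x, |(1 / (N : ℝ)) * (∑ i, gaussDensity d (μδ • y i) σδ2 x) -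
      (1 / (N : ℝ)) * (∑ i, gaussDensity d (y i) σδ2 x)| ≤ g x := by
    intro x
    rw [hg, ← mul_sub, abs_mul, ← Finset.sum_sub_distrib,
      abs_of_nonneg (by positivity : (0:ℝ) ≤ 1 / (N:ℝ))]
    exact mul_le_mul_of_nonneg_left (Finset.abs_sum_le_sum_abs _ _) (by positivity)
  have hint : ∫ x, |(1 / (N : ℝ)) * (∑ i, gaussDensity d (μδ • y i) σδ2 x) -
      (1 / (N : ℝ)) * (∑ i, gaussDensity d (y i) σδ2 x)| ≤ ∫ x, g x :=
    integral_mono_of_nonneg (ae_of_all _ fun x => abs_nonneg _) hgint (ae_of_all _ hmono)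
  have hgval : ∫ x, g x ≤ (1 - μδ) * d / Real.sqrt σδ2 := by
    rw [hg]
    simp only
    rw [integral_const_mul, integral_finset_sum Finset.univ
      (f := fun (i : Fin N) (x : EuclideanSpace ℝ (Fin d)) =>
        |gaussDensity d (μδ • y i) σδ2 x - gaussDensity d (y i) σδ2 x|)
      (fun i _ => ((gaussDensity_integrable hs2 _).sub (gaussDensity_integrable hs2 _)).abs)]
    calc (1 / (N:ℝ)) * ∑ i, ∫ x, |gaussDensity d (μδ • y i) σδ2 x - gaussDensity d (y i) σδ2 x|
        ≤ (1 / (N:ℝ)) * ∑ _i : Fin N, ((1 - μδ) * d / Real.sqrt σδ2) := by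
          apply mul_le_mul_of_nonneg_left _ (by positivity)
          exact Finset.sum_le_sum fun i _ => hcomp i
      _ = (1 / (N:ℝ)) * (N * ((1 - μδ) * d / Real.sqrt σδ2)) := by
          rw [Finset.sum_const, Finset.card_univ, Fintype.card_fin, nsmul_eq_mul]
      _ = (1 - μδ) * d / Real.sqrt σδ2 := by
          field_simp
  have hfinal : (1 - μδ) * d / Real.sqrt σδ2 ≤ d * Real.sqrt δ := by
    rw [show (1 - μδ) * d / Real.sqrt σδ2 = (d:ℝ) * ((1 - μδ) / Real.sqrt σδ2) by ring]
    exact mul_le_mul_of_nonneg_left hfrac (Nat.cast_nonneg d)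
  calc (1 / 2) * ∫ x, |(1 / (N : ℝ)) * (∑ i, gaussDensity d (μδ • y i) σδ2 x) -
        (1 / (N : ℝ)) * (∑ i, gaussDensity d (y i) σδ2 x)|
      ≤ (1/2) * ((1 - μδ) * d / Real.sqrt σδ2) := by
        apply mul_le_mul_of_nonneg_left (hint.trans hgval) (by norm_num)
    _ ≤ (1/2) * (d * Real.sqrt δ) := by
        apply mul_le_mul_of_nonneg_left hfinal (by norm_num)
    _ = (d : ℝ) * Real.sqrt δ / 2 := by ring
end
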